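/- Let D be a probability distribution on a finite set X, f : X → {−1,1}, h : X → ℝ, and define the reweighted distribution D_h(x) = D(x)exp(−h(x)f(x))/Z_h where Z_h = Σ_x D(x)exp(−h(x)f(x)). Let h̃ : X → {−1,1} and set r = R_{D_h}(h̃) = D_h({x : h̃(x) ≠ f(x)}), assumed to lie in (0,1). Then the exponential risk R_D^exp(h + η h̃) = Σ_x exp(−(h(x)+η h̃(x))f(x))D(x), viewed as a function of η ∈ ℝ, is minimized at η* = (1/2)·log(1/r − 1), and R_D^exp(h + η* h̃) = 2 Z_h √(r(1−r)). -/

import Mathlib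

open Classical in
/-- The exponential risk `η ↦ R_D^exp(h + η h̃)` is minimized at
`η* = (1/2)·log(1/r − 1)` where `r = R_{D_h}(h̃)`, with minimum value `2 Z_h √(r(1−r))`. -/
theorem exp_loss_optimal_step {X : Type*} [Fintype X]
    (D : X → ℝ) (hDnn : ∀ x, 0 ≤ D x) (hDsum : ∑ x, D x = 1)
    (f : X → ℝ) (hf : ∀ x, f x = 1 ∨ f x = -1)
    (h : X → ℝ)
    (Z : ℝ) (hZ : Z = ∑ x, D x * Real.exp (-(h x * f x)))
    (Dh : X → ℝ) (hDh : ∀ x, Dh x = D x * Real.exp (-(h x * f x)) / Z)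
    (htil : X → ℝ) (htilpm : ∀ x, htil x = 1 ∨ htil x = -1)
    (r : ℝ) (hr : r = ∑ x ∈ Finset.univ.filter (fun x => htil x ≠ f x), Dh x)
    (hr0 : 0 < r) (hr1 : r < 1)
    (Rexp : ℝ → ℝ)
    (hRexp : ∀ η, Rexp η = ∑ x, Real.exp (-((h x + η * htil x) * f x)) * D x) :
    (∀ η, Rexp ((1 / 2) * Real.log (1 / r - 1)) ≤ Rexp η) ∧
    Rexp ((1 / 2) * Real.log (1 / r - 1)) = 2 * Z * Real.sqrt (r * (1 - r)) := by
  have hZpos : 0 < Z := by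
    rw [hZ]
    obtain ⟨x0, hx0⟩ : ∃ x, 0 < D x := by
      by_contra hc
      push_neg at hc
      have : ∑ x, D x ≤ 0 := Finset.sum_nonpos (fun x _ => hc x)
      linarith
    exact Finset.sum_pos' (fun x _ => mul_nonneg (hDnn x) (Real.exp_pos _).le)
      ⟨x0, Finset.mem_univ _, mul_pos hx0 (Real.exp_pos _)⟩
  set w : X → ℝ := fun x => D x * Real.exp (-(h x * f x)) with hw
  set S := ∑ x ∈ Finset.univ.filter (fun x => htil x ≠ f x), w x with hS
  have hSrZ : S = r * Z := by
    rw [hr, Finset.sum_congr rfl (fun x _ => hDh x), ← Finset.sum_div, ← hS]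
    field_simp
  have hsplit : ∑ x ∈ Finset.univ.filter (fun x => ¬ htil x ≠ f x), w x = Z - S := by
    have := Finset.sum_filter_add_sum_filter_not Finset.univ (fun x => htil x ≠ f x) w
    rw [hZ]
    simp only [hw] at this ⊢
    linarith
  have key : ∀ η, Rexp η = Z * (Real.exp (-η) * (1 - r) + Real.exp η * r) := by
    intro η
    rw [hRexp]
    have hterm : ∀ x, Real.exp (-((h x + η * htil x) * f x)) * D x =
        (if htil x ≠ f x then Real.exp η else Real.exp (-η)) * w x := by
      intro x
      have hprod : htil x * f x = (if htil x ≠ f x then -1 else 1) := by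
        rcases hf x with hfx | hfx <;> rcases htilpm x with hx | hx <;>
          simp [hfx, hx] <;> norm_num
      have : (h x + η * htil x) * f x = h x * f x + η * (htil x * f x) := by ring
      rw [this, hprod]
      by_cases hc : htil x ≠ f x <;>
        simp [hc, hw, neg_add, Real.exp_add] <;> ring
    rw [Finset.sum_congr rfl (fun x _ => hterm x)]
    rw [← Finset.sum_filter_add_sum_filter_not Finset.univ (fun x => htil x ≠ f x)]
    have h1 : ∑ x ∈ Finset.univ.filter (fun x => htil x ≠ f x),
        (if htil x ≠ f x then Real.exp η else Real.exp (-η)) * w x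
        = Real.exp η * S := by
      rw [hS, Finset.mul_sum]
      refine Finset.sum_congr rfl fun x hx => ?_
      simp only [Finset.mem_filter] at hx
      simp [hx.2]
    have h2 : ∑ x ∈ Finset.univ.filter (fun x => ¬ htil x ≠ f x),
        (if htil x ≠ f x then Real.exp η else Real.exp (-η)) * w x
        = Real.exp (-η) * (Z - S) := by
      rw [← hsplit, Finset.mul_sum]
      refine Finset.sum_congr rfl fun x hx => ?_
      simp only [Finset.mem_filter] at hx
      simp [hx.2]
    rw [h1, h2, hSrZ]
    ring
  set t : ℝ := 1 / r - 1 with ht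
  have htpos : 0 < t := by
    have h1 : 1 < 1 / r := one_lt_one_div hr0 hr1
    rw [ht]; linarith
  have hexp : Real.exp ((1 / 2) * Real.log t) = Real.sqrt t := by
    rw [Real.sqrt_eq_rpow, Real.rpow_def_of_pos htpos, mul_comm]
  set a := Real.sqrt t with ha
  have hapos : 0 < a := Real.sqrt_pos.mpr htpos
  have ha2 : a ^ 2 * r = 1 - r := by
    have : a ^ 2 = t := Real.sq_sqrt htpos.le
    rw [this, ht]
    field_simp
  set s := Real.sqrt (r * (1 - r)) with hs
  have hsnn : 0 ≤ s := Real.sqrt_nonneg _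
  have hs2 : s ^ 2 = r * (1 - r) := Real.sq_sqrt (by nlinarith)
  have hval : Rexp ((1 / 2) * Real.log t) = 2 * Z * s := by
    rw [key, hexp, Real.exp_neg, hexp]
    have haa : a ^ 2 = (1 - r) / r := by
      have h2 : a ^ 2 = t := Real.sq_sqrt htpos.le
      rw [h2, ht]; field_simp
    have hsa2 : (s * a) ^ 2 = (1 - r) ^ 2 := by
      have h3 : (s * a) ^ 2 = s ^ 2 * a ^ 2 := by ring
      rw [h3, hs2, haa]
      field_simp
    have hsa : s * a = 1 - r := by
      have hfac : (s * a - (1 - r)) * (s * a + (1 - r)) = 0 := by nlinarith [hsa2]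
      rcases mul_eq_zero.mp hfac with h1 | h1
      · linarith
      · nlinarith [mul_nonneg hsnn hapos.le]
    have key4 : a * a⁻¹ = 1 := mul_inv_cancel₀ hapos.ne'
    have h4 : a * (a⁻¹ * (1 - r) + a * r) = a * (2 * s) := by
      linear_combination (1 - r) * key4 + ha2 - 2 * hsa
    have h5 : a⁻¹ * (1 - r) + a * r = 2 * s := mul_left_cancel₀ hapos.ne' h4
    rw [h5]; ring
  refine ⟨fun η => ?_, hval⟩
  rw [hval, key]
  have hupos : 0 < Real.exp η := Real.exp_pos η
  set u := Real.exp η with hu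
  have huneg : Real.exp (-η) = u⁻¹ := Real.exp_neg η
  rw [huneg]
  have hineq : 0 ≤ u⁻¹ * (1 - r) + u * r - 2 * s := by
    have h1 : 0 ≤ (1 - r) + u ^ 2 * r - 2 * s * u := by
      have h0 : r * ((1 - r) + u ^ 2 * r - 2 * s * u) = (s - u * r) ^ 2 := by
        linear_combination -hs2
      by_contra hcon
      push_neg at hcon
      have hneg : r * ((1 - r) + u ^ 2 * r - 2 * s * u) < 0 :=
        mul_neg_of_pos_of_neg hr0 (by linarith)
      rw [h0] at hneg
      exact absurd hneg (not_lt.mpr (sq_nonneg _))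
    have : u⁻¹ * (1 - r) + u * r - 2 * s = ((1 - r) + u ^ 2 * r - 2 * s * u) / u := by
      field_simp
    rw [this]
    exact div_nonneg h1 hupos.le
  have h6 : 2 * s ≤ u⁻¹ * (1 - r) + u * r := by linarith
  have h7 := mul_le_mul_of_nonneg_left h6 hZpos.le
  linarith
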